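/- Assume p < q (i.e. β is not a simple root). Let g be a matrix with entries in 𝒪 such that g_{i,j} ∈ t^{λ_i − λ_j}𝒪 for all 1 ≤ i < j ≤ n+1, and such that (x̃⁻¹ g x)_{i,j} ∈ t^{ν*_i − ν*_j}𝒪 for all 1 ≤ i < j ≤ n+1. Then t divides g_{q+1,j} in 𝒪 for every j with q+1 ≤ j ≤ n. -/

import Mathlib

open Matrix

noncomputable section

/-- The ring `𝒪 = ℂ[[t]]` of formal power series. -/
abbrev OO : Type := PowerSeries ℂ

/-- The field `K = ℂ((t))` of formal Laurent series. -/
abbrev KK : Type := LaurentSeries ℂ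

/-- `t^k ∈ K` for an integer `k`. -/
def tz (k : ℤ) : KK := HahnSeries.single k 1

/-- The inclusion `𝒪 → K`. -/
def coeO : OO →+* KK := HahnSeries.ofPowerSeries ℤ ℂ

/-- `f` belongs to the `𝒪`-lattice `t^k 𝒪 ⊆ K`. -/
def memT (k : ℤ) (f : KK) : Prop := ∃ w : OO, f = tz k * coeO w

/-- The `GL`-coordinates of the coroot `β∨ = e_p − e_{q+1}` (indices `0`-based). -/
def bcov (p q : ℕ) (i : ℕ) : ℤ := (if i = p then 1 else 0) - (if i = q + 1 then 1 else 0)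

/-- The matrix `x = I + Σ_{j=p+1}^{q+1} t^{λ_p − λ_j − N} E_{p,j}` (indices `0`-based). -/
def xMat (n N p q : ℕ) (lam : ℕ → ℤ) : Matrix (Fin (n+1)) (Fin (n+1)) KK :=
  Matrix.of fun i j =>
    if i = j then 1
    else if (i : ℕ) = p ∧ p < (j : ℕ) ∧ (j : ℕ) ≤ q + 1 then tz (lam p - lam j - N)
    else 0

/-- The matrix `x̃ = I + Σ_{i=p}^{q} t^{λ_i − λ_{q+1} − N} E_{i,q+1}` (indices `0`-based). -/
def xtMat (n N p q : ℕ) (lam : ℕ → ℤ) : Matrix (Fin (n+1)) (Fin (n+1)) KK :=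
  Matrix.of fun i j =>
    if i = j then 1
    else if p ≤ (i : ℕ) ∧ (i : ℕ) ≤ q ∧ (j : ℕ) = q + 1 then tz (lam i - lam (q + 1) - N)
    else 0

/-! ### Auxiliary lemmas -/

lemma tz_mul_tz (a b : ℤ) : tz a * tz b = tz (a + b) := by
  simp [tz, HahnSeries.single_mul_single]

lemma tz_zero : tz 0 = 1 := HahnSeries.single_zero_one

lemma coeO_X_pow (m : ℕ) : coeO (PowerSeries.X ^ m) = tz (m : ℤ) := by
  simp only [coeO, tz]
  rw [HahnSeries.ofPowerSeries_X_pow]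

lemma memT_mono {k k' : ℤ} (h : k' ≤ k) {f : KK} (hf : memT k f) : memT k' f := by
  obtain ⟨w, rfl⟩ := hf
  refine ⟨PowerSeries.X ^ (k - k').toNat * w, ?_⟩
  rw [_root_.map_mul, coeO_X_pow, ← mul_assoc, tz_mul_tz]
  congr 2
  omega

lemma memT_add {k : ℤ} {f f' : KK} (h : memT k f) (h' : memT k f') : memT k (f + f') := by
  obtain ⟨w, rfl⟩ := h; obtain ⟨w', rfl⟩ := h'
  exact ⟨w + w', by rw [_root_.map_add, mul_add]⟩

lemma memT_neg {k : ℤ} {f : KK} (h : memT k f) : memT k (-f) := by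
  obtain ⟨w, rfl⟩ := h
  exact ⟨-w, by rw [_root_.map_neg]; ring⟩

lemma memT_sub {k : ℤ} {f f' : KK} (h : memT k f) (h' : memT k f') : memT k (f - f') := by
  rw [sub_eq_add_neg]; exact memT_add h (memT_neg h')

lemma memT_key {k m : ℤ} {w : OO} (h : memT k (tz m * coeO w)) (hk : m < k) :
    (PowerSeries.X : OO) ∣ w := by
  obtain ⟨u, hu⟩ := h
  have h2 : coeO w = coeO (PowerSeries.X ^ (k - m).toNat * u) := by
    have := congrArg (fun z => tz (-m) * z) hu
    rw [← mul_assoc, ← mul_assoc, tz_mul_tz, tz_mul_tz] at this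
    simp only [neg_add_cancel, tz_zero, one_mul] at this
    rw [this, _root_.map_mul, coeO_X_pow]
    congr 2
    omega
  have h3 : w = PowerSeries.X ^ (k - m).toNat * u :=
    HahnSeries.ofPowerSeries_injective h2
  rw [h3]
  exact Dvd.dvd.mul_right (dvd_pow_self _ (by omega)) u

/-- The nilpotent part of `x̃`. -/
def Emat (n N p q : ℕ) (lam : ℕ → ℤ) : Matrix (Fin (n+1)) (Fin (n+1)) KK :=
  Matrix.of fun i j =>
    if p ≤ (i : ℕ) ∧ (i : ℕ) ≤ q ∧ (j : ℕ) = q + 1 then tz (lam i - lam (q + 1) - N) else 0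

/-- The nilpotent part of `x`. -/
def Fmat (n N p q : ℕ) (lam : ℕ → ℤ) : Matrix (Fin (n+1)) (Fin (n+1)) KK :=
  Matrix.of fun i j =>
    if (i : ℕ) = p ∧ p < (j : ℕ) ∧ (j : ℕ) ≤ q + 1 then tz (lam p - lam j - N) else 0

lemma xtMat_eq (n N p q : ℕ) (lam : ℕ → ℤ) :
    xtMat n N p q lam = 1 + Emat n N p q lam := by
  ext i j
  simp only [xtMat, Emat, Matrix.add_apply, Matrix.one_apply, Matrix.of_apply]
  rcases eq_or_ne i j with rfl | h
  · have hc : ¬(p ≤ (i : ℕ) ∧ (i : ℕ) ≤ q ∧ (i : ℕ) = q + 1) := by omega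
    simp [hc]
  · simp [h]

lemma xMat_eq (n N p q : ℕ) (lam : ℕ → ℤ) :
    xMat n N p q lam = 1 + Fmat n N p q lam := by
  ext i j
  simp only [xMat, Fmat, Matrix.add_apply, Matrix.one_apply, Matrix.of_apply]
  rcases eq_or_ne i j with rfl | h
  · have hc : ¬((i : ℕ) = p ∧ p < (i : ℕ) ∧ (i : ℕ) ≤ q + 1) := by omega
    simp [hc]
  · simp [h]

lemma Emat_sq (n N p q : ℕ) (lam : ℕ → ℤ) :
    Emat n N p q lam * Emat n N p q lam = 0 := by
  refine Matrix.ext fun i j => ?_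
  rw [Matrix.mul_apply, Matrix.zero_apply]
  apply Finset.sum_eq_zero
  intro k _
  simp only [Emat, Matrix.of_apply]
  by_cases h1 : p ≤ (i : ℕ) ∧ (i : ℕ) ≤ q ∧ (k : ℕ) = q + 1
  · have h2 : ¬(p ≤ (k : ℕ) ∧ (k : ℕ) ≤ q ∧ (j : ℕ) = q + 1) := by omega
    simp [h2]
  · simp [h1]

lemma xt_inv (n N p q : ℕ) (lam : ℕ → ℤ) :
    (xtMat n N p q lam)⁻¹ = 1 - Emat n N p q lam := by
  apply Matrix.inv_eq_right_inv
  rw [xtMat_eq]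
  have h : (1 + Emat n N p q lam) * (1 - Emat n N p q lam)
      = 1 - Emat n N p q lam * Emat n N p q lam := by
    rw [mul_sub]
    simp only [add_mul, one_mul, mul_one]
    abel
  rw [h, Emat_sq, sub_zero]

lemma Emat_mul (n N p q : ℕ) (lam : ℕ → ℤ) (hq : q < n)
    (M : Matrix (Fin (n+1)) (Fin (n+1)) KK) (i j : Fin (n+1)) :
    (Emat n N p q lam * M) i j =
      (if p ≤ (i : ℕ) ∧ (i : ℕ) ≤ q then tz (lam i - lam (q + 1) - N) else 0) *
        M (⟨q + 1, by omega⟩ : Fin (n+1)) j := by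
  rw [Matrix.mul_apply]
  have h1 : ∀ k : Fin (n+1), k ≠ (⟨q + 1, by omega⟩ : Fin (n+1)) →
      Emat n N p q lam i k * M k j = 0 := by
    intro k hk
    have hk' : (k : ℕ) ≠ q + 1 := fun h => hk (Fin.ext h)
    have hc : ¬(p ≤ (i : ℕ) ∧ (i : ℕ) ≤ q ∧ (k : ℕ) = q + 1) := by tauto
    simp [Emat, hc]
  rw [Fintype.sum_eq_single _ h1]
  by_cases h : p ≤ (i : ℕ) ∧ (i : ℕ) ≤ q
  · simp [Emat, h.1, h.2]
  · have hc : ¬(p ≤ (i : ℕ) ∧ (i : ℕ) ≤ q ∧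
        ((⟨q + 1, by omega⟩ : Fin (n+1)) : ℕ) = q + 1) := fun hc => h ⟨hc.1, hc.2.1⟩
    simp [Emat, hc, h]

lemma mul_Fmat (n N p q : ℕ) (lam : ℕ → ℤ) (hp : p < n)
    (M : Matrix (Fin (n+1)) (Fin (n+1)) KK) (i j : Fin (n+1)) :
    (M * Fmat n N p q lam) i j =
      M i (⟨p, by omega⟩ : Fin (n+1)) *
        (if p < (j : ℕ) ∧ (j : ℕ) ≤ q + 1 then tz (lam p - lam j - N) else 0) := by
  rw [Matrix.mul_apply]
  have h1 : ∀ k : Fin (n+1), k ≠ (⟨p, by omega⟩ : Fin (n+1)) →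
      M i k * Fmat n N p q lam k j = 0 := by
    intro k hk
    have hk' : (k : ℕ) ≠ p := fun h => hk (Fin.ext h)
    have hc : ¬((k : ℕ) = p ∧ p < (j : ℕ) ∧ (j : ℕ) ≤ q + 1) := by tauto
    simp [Fmat, hc]
  rw [Fintype.sum_eq_single _ h1]
  by_cases h : p < (j : ℕ) ∧ (j : ℕ) ≤ q + 1
  · simp [Fmat, h.1, h.2]
  · have hc : ¬(((⟨p, by omega⟩ : Fin (n+1)) : ℕ) = p ∧ p < (j : ℕ) ∧ (j : ℕ) ≤ q + 1) :=
      fun hc => h hc.2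
    simp [Fmat, hc, h]

set_option maxHeartbeats 2000000 in
/-- assume `p < q`.  If `g` has entries in `𝒪`, `g_{i,j} ∈ t^{λ_i−λ_j}𝒪` for
`i < j`, and `(x̃⁻¹ g x)_{i,j} ∈ t^{ν*_i−ν*_j}𝒪` for `i < j`, then `t` divides `g_{q+1,j}`
in `𝒪` for every column `j` with `q+1 ≤ j ≤ n−1`.
(Indices are `0`-based: rows and columns run through `0,…,n`, and `0 ≤ p ≤ q ≤ n−1`;
the stated column range is the `0`-based translation of the paper's `q+1 ≤ j ≤ n`.) -/
theorem stmt9 (n : ℕ) (hn : 1 ≤ n) (N : ℕ) (hN : 1 ≤ N)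
    (p q : ℕ) (hpq : p < q) (hq : q < n)
    (lam mu : ℕ → ℤ)
    (hlam : ∀ i j : ℕ, i ≤ j → j ≤ n → lam j ≤ lam i)
    (hmu : ∀ i j : ℕ, i ≤ j → j ≤ n → mu j ≤ mu i)
    (nus : ℕ → ℤ) (hnus : ∀ i, nus i = lam i + mu i - N * bcov p q i)
    (hnusdom : ∀ i j : ℕ, i ≤ j → j ≤ n → nus j ≤ nus i)
    (h2a : (N : ℤ) ≤ lam p - lam (p + 1)) (h2b : (N : ℤ) ≤ lam q - lam (q + 1))
    (h2c : (N : ℤ) ≤ mu p - mu (p + 1)) (h2d : (N : ℤ) ≤ mu q - mu (q + 1))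
    (g : Matrix (Fin (n+1)) (Fin (n+1)) OO)
    (hglam : ∀ i j : Fin (n+1), i < j → memT (lam i - lam j) (coeO (g i j)))
    (hgnus : ∀ i j : Fin (n+1), i < j →
      memT (nus i - nus j) (((xtMat n N p q lam)⁻¹ * g.map coeO * xMat n N p q lam) i j)) :
    ∀ j : Fin (n+1), q + 1 ≤ (j : ℕ) → (j : ℕ) < n →
      (PowerSeries.X : OO) ∣ g (⟨q + 1, by omega⟩ : Fin (n+1)) j := by
  intro j hj1 hj2
  set G : Matrix (Fin (n+1)) (Fin (n+1)) KK := g.map coeO with hG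
  set E : Matrix (Fin (n+1)) (Fin (n+1)) KK := Emat n N p q lam with hE
  set F : Matrix (Fin (n+1)) (Fin (n+1)) KK := Fmat n N p q lam with hF
  have hpn : p < n := lt_trans hpq hq
  have hA : (xtMat n N p q lam)⁻¹ * G * xMat n N p q lam
      = G + G * F - E * G - E * (G * F) := by
    rw [xt_inv, xMat_eq, ← hE, ← hF, sub_mul, one_mul, mul_add, mul_one, sub_mul, mul_assoc]
    abel
  set q1 : Fin (n+1) := (⟨q + 1, by omega⟩ : Fin (n+1)) with hq1
  set pF : Fin (n+1) := (⟨p, by omega⟩ : Fin (n+1)) with hpF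
  have hvq1 : (q1 : ℕ) = q + 1 := rfl
  have hvp : (pF : ℕ) = p := rfl
  -- useful valuation facts
  have hlpq : (N : ℤ) ≤ lam p - lam q := by
    have := hlam (p + 1) q hpq (le_of_lt hq)
    omega
  rcases eq_or_lt_of_le hj1 with hje | hjlt
  · -- j = q + 1 : use the (q, q+1) entry
    have hjq1 : j = q1 := Fin.ext (by rw [hvq1]; omega)
    rw [hjq1]
    set qF : Fin (n+1) := (⟨q, by omega⟩ : Fin (n+1)) with hqF
    have hvq : (qF : ℕ) = q := rfl
    have hlt : qF < q1 := by rw [Fin.lt_def, hvq, hvq1]; omega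
    have hAe := hgnus qF q1 hlt
    rw [hA] at hAe
    have hq1' : ((⟨q + 1, by omega⟩ : Fin (n+1))) = q1 := rfl
    have hp' : ((⟨p, by omega⟩ : Fin (n+1))) = pF := rfl
    have hcE : p ≤ (qF : ℕ) ∧ (qF : ℕ) ≤ q := by
      rw [hvq]; exact ⟨le_of_lt hpq, le_refl q⟩
    have hcF : p < (q1 : ℕ) ∧ (q1 : ℕ) ≤ q + 1 := by
      rw [hvq1]; omega
    -- compute the four entry contributions
    have hEG : (E * G) qF q1 = tz (lam q - lam (q + 1) - N) * G q1 q1 := by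
      rw [hE, Emat_mul n N p q lam hq G qF q1, if_pos hcE, hq1', hvq]
    have hGF : (G * F) qF q1 = G qF pF * tz (lam p - lam (q + 1) - N) := by
      rw [hF, mul_Fmat n N p q lam hpn G qF q1, if_pos hcF, hp', hvq1]
    have hGF' : (G * F) q1 q1 = G q1 pF * tz (lam p - lam (q + 1) - N) := by
      rw [hF, mul_Fmat n N p q lam hpn G q1 q1, if_pos hcF, hp', hvq1]
    have hEGF : (E * (G * F)) qF q1
        = tz (lam q - lam (q + 1) - N) * (G q1 pF * tz (lam p - lam (q + 1) - N)) := by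
      rw [hE, Emat_mul n N p q lam hq (G * F) qF q1, if_pos hcE, hq1', hGF', hvq]
    have hsolve : tz (lam q - lam (q + 1) - N) * G q1 q1
        = G qF q1 + G qF pF * tz (lam p - lam (q + 1) - N)
          - tz (lam q - lam (q + 1) - N) * (G q1 pF * tz (lam p - lam (q + 1) - N))
          - ((G + G * F - E * G - E * (G * F)) qF q1) := by
      simp only [Matrix.add_apply, Matrix.sub_apply, hEG, hGF, hEGF]
      ring
    -- each term on the RHS lies in t^{c+1} O
    have hm1 : memT (lam q - lam (q + 1) - N + 1) (G qF q1) := by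
      apply memT_mono _ (hglam qF q1 hlt)
      rw [hvq, hvq1]
      omega
    have hm2 : memT (lam q - lam (q + 1) - N + 1) (G qF pF * tz (lam p - lam (q + 1) - N)) := by
      apply memT_mono (show lam q - lam (q + 1) - (N:ℤ) + 1 ≤ lam p - lam (q + 1) - N by omega)
      exact ⟨g qF pF, by rw [hG, Matrix.map_apply, mul_comm]⟩
    have hm3 : memT (lam q - lam (q + 1) - N + 1)
        (tz (lam q - lam (q + 1) - N) * (G q1 pF * tz (lam p - lam (q + 1) - N))) := by
      apply memT_mono (show lam q - lam (q + 1) - (N:ℤ) + 1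
        ≤ (lam q - lam (q + 1) - N) + (lam p - lam (q + 1) - N) by omega)
      refine ⟨g q1 pF, ?_⟩
      rw [hG, Matrix.map_apply, ← tz_mul_tz]
      ring
    have hb1 : bcov p q q = 0 := by
      unfold bcov
      rw [if_neg (by omega), if_neg (by omega)]
      ring
    have hb2 : bcov p q (q + 1) = -1 := by
      unfold bcov
      rw [if_neg (by omega), if_pos rfl]
      ring
    have hnval : nus q - nus (q + 1)
        = lam q + mu q - (lam (q + 1) + mu (q + 1)) - N := by
      rw [hnus q, hnus (q + 1), hb1, hb2]
      ring
    have hm4 : memT (lam q - lam (q + 1) - N + 1) ((G + G * F - E * G - E * (G * F)) qF q1) := by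
      apply memT_mono _ hAe
      rw [hvq, hvq1, hnval]
      omega
    have hmem : memT (lam q - lam (q + 1) - N + 1)
        (tz (lam q - lam (q + 1) - N) * coeO (g q1 q1)) := by
      have : tz (lam q - lam (q + 1) - N) * coeO (g q1 q1)
          = tz (lam q - lam (q + 1) - N) * G q1 q1 := by
        rw [hG, Matrix.map_apply]
      rw [this, hsolve]
      exact memT_sub (memT_sub (memT_add hm1 hm2) hm3) hm4
    exact memT_key hmem (by omega)
  · -- q + 1 < j : the (q+1, j) entry of the product is just G (q+1) j
    have hlt : q1 < j := by rw [Fin.lt_def, hvq1]; exact hjlt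
    have hAe := hgnus q1 j hlt
    rw [hA] at hAe
    have hcE : ¬(p ≤ (q1 : ℕ) ∧ (q1 : ℕ) ≤ q) := by
      rw [hvq1]; omega
    have hcF : ¬(p < (j : ℕ) ∧ (j : ℕ) ≤ q + 1) := by omega
    have hEG : (E * G) q1 j = 0 := by
      rw [hE, Emat_mul n N p q lam hq G q1 j, if_neg hcE, zero_mul]
    have hGF : (G * F) q1 j = 0 := by
      rw [hF, mul_Fmat n N p q lam hpn G q1 j, if_neg hcF, mul_zero]
    have hEGF : (E * (G * F)) q1 j = 0 := by
      rw [hE, Emat_mul n N p q lam hq (G * F) q1 j, if_neg hcE, zero_mul]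
    have hent : (G + G * F - E * G - E * (G * F)) q1 j = coeO (g q1 j) := by
      simp only [Matrix.add_apply, Matrix.sub_apply, hEG, hGF, hEGF, add_zero, sub_zero]
      rw [hG, Matrix.map_apply]
    rw [hent] at hAe
    have hmem : memT (nus (q1 : ℕ) - nus (j : ℕ)) (tz 0 * coeO (g q1 j)) := by
      rw [tz_zero, one_mul]; exact hAe
    have hb2 : bcov p q (q + 1) = -1 := by
      unfold bcov
      rw [if_neg (by omega), if_pos rfl]
      ring
    have hb3 : bcov p q (j : ℕ) = 0 := by
      unfold bcov
      rw [if_neg (by omega), if_neg (by omega)]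
      ring
    have hnval : nus (q + 1) - nus (j : ℕ)
        = lam (q + 1) + mu (q + 1) + N - (lam (j : ℕ) + mu (j : ℕ)) := by
      rw [hnus (q + 1), hnus (j : ℕ), hb2, hb3]
      ring
    have hl := hlam (q + 1) (j : ℕ) (by omega) (by omega)
    have hm := hmu (q + 1) (j : ℕ) (by omega) (by omega)
    apply memT_key hmem
    rw [hvq1, hnval]
    omega
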